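/- The stationary Ornstein-Uhlenbeck process with drift matrix B (all eigenvalues with negative real part) and diffusion matrix Q = ΣΣ^T > 0 has entropy production rate e_p = 0 if and only if Q^{-1}B is symmetric, i.e., Q^{-1}B = (Q^{-1}B)^T. -/

import Mathlib

open Matrix MeasureTheory Filter
open scoped Matrix

attribute [local instance] Matrix.linftyOpNormedRing Matrix.linftyOpNormedAlgebra

/-- All eigenvalues of `B` have negative real part. -/
def IsStableMatrix {d : ℕ} (B : Matrix (Fin d) (Fin d) ℝ) : Prop :=
  ∀ z ∈ spectrum ℂ (B.map (algebraMap ℝ ℂ)), z.re < 0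

lemma aux_trace_transpose_mul_self_eq_zero {d : ℕ} (N : Matrix (Fin d) (Fin d) ℝ)
    (h : (Nᵀ * N).trace = 0) : N = 0 := by
  have h' : ∑ j, ∑ i, (N i j) ^ 2 = 0 := by
    rw [← h]
    simp [Matrix.trace, Matrix.diag, Matrix.mul_apply, sq]
  ext i j
  have hj := (Finset.sum_eq_zero_iff_of_nonneg (fun j _ => Finset.sum_nonneg
      (fun i _ => sq_nonneg (N i j)))).1 h' j (Finset.mem_univ j)
  have := (Finset.sum_eq_zero_iff_of_nonneg (fun i _ => sq_nonneg (N i j))).1 hj i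
      (Finset.mem_univ i)
  simpa using pow_eq_zero_iff (n := 2) (by norm_num) |>.1 this

/-- the entropy production rate `e_p = (1/2)tr((2Q⁻¹B + Γ⁻¹)ᵀQ(2Q⁻¹B + Γ⁻¹)Γ)`
of the stationary OU process vanishes iff `Q⁻¹B` is symmetric. -/
theorem entropy_production_rate_zero_iff_symm {d : ℕ} (B Q Γ : Matrix (Fin d) (Fin d) ℝ)
    (hB : IsStableMatrix B) (hQ : Q.PosDef) (hΓ : Γ.PosDef)
    (hlyap : B * Γ + Γ * Bᵀ + Q = 0) :
    (1 / 2 : ℝ) *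
        ((((2:ℝ) • (Q⁻¹ * B) + Γ⁻¹)ᵀ * Q * ((2:ℝ) • (Q⁻¹ * B) + Γ⁻¹) * Γ).trace) = 0 ↔
      (Q⁻¹ * B).IsSymm := by
  have hQd : IsUnit Q.det := isUnit_iff_ne_zero.2 hQ.det_pos.ne'
  have hΓd : IsUnit Γ.det := isUnit_iff_ne_zero.2 hΓ.det_pos.ne'
  have hQsym : Qᵀ = Q := by
    exact (by simpa [conjTranspose_eq_transpose_of_trivial] using hQ.1 : Q.IsSymm)
  have hΓsym : Γᵀ = Γ := by
    exact (by simpa [conjTranspose_eq_transpose_of_trivial] using hΓ.1 : Γ.IsSymm)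
  have hQisym : (Q⁻¹)ᵀ = Q⁻¹ := by rw [transpose_nonsing_inv, hQsym]
  have hΓisym : (Γ⁻¹)ᵀ = Γ⁻¹ := by rw [transpose_nonsing_inv, hΓsym]
  have hQQi : Q * Q⁻¹ = 1 := mul_nonsing_inv Q hQd
  have hQiQ : Q⁻¹ * Q = 1 := nonsing_inv_mul Q hQd
  have hΓΓi : Γ * Γ⁻¹ = 1 := mul_nonsing_inv Γ hΓd
  have hΓiΓ : Γ⁻¹ * Γ = 1 := nonsing_inv_mul Γ hΓd
  set M := (2:ℝ) • (Q⁻¹ * B) + Γ⁻¹ with hM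
  constructor
  · intro h
    -- forward: trace zero ⟹ M = 0 ⟹ symmetric
    set sQ := (open MatrixOrder in CFC.sqrt Q) with hsQ
    set sΓ := (open MatrixOrder in CFC.sqrt Γ) with hsΓ
    have hsQ2 : sQ * sQ = Q := open MatrixOrder in CFC.sqrt_mul_sqrt_self Q hQ.posSemidef.nonneg
    have hsΓ2 : sΓ * sΓ = Γ := open MatrixOrder in CFC.sqrt_mul_sqrt_self Γ hΓ.posSemidef.nonneg
    have hsQs : sQᵀ = sQ := by
      exact (by simpa [conjTranspose_eq_transpose_of_trivial] using
        (open MatrixOrder in (CFC.sqrt_nonneg Q).posSemidef).1 : sQ.IsSymm)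
    have hsΓs : sΓᵀ = sΓ := by
      exact (by simpa [conjTranspose_eq_transpose_of_trivial] using
        (open MatrixOrder in (CFC.sqrt_nonneg Γ).posSemidef).1 : sΓ.IsSymm)
    have hsQd : IsUnit sQ.det := by
      have hd : sQ.det * sQ.det = Q.det := by rw [← det_mul, hsQ2]
      exact isUnit_iff_ne_zero.2 fun h0 => hQ.det_pos.ne' (by rw [← hd, h0, zero_mul])
    have hsΓd : IsUnit sΓ.det := by
      have hd : sΓ.det * sΓ.det = Γ.det := by rw [← det_mul, hsΓ2]
      exact isUnit_iff_ne_zero.2 fun h0 => hΓ.det_pos.ne' (by rw [← hd, h0, zero_mul])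
    set N := sQ * M * sΓ with hN
    have hNe : Nᵀ * N = sΓ * (Mᵀ * (Q * (M * sΓ))) := by
      rw [hN, transpose_mul, transpose_mul, hsQs, hsΓs, ← hsQ2]
      simp only [Matrix.mul_assoc]
    have htr : (Nᵀ * N).trace = (Mᵀ * Q * M * Γ).trace := by
      rw [hNe, trace_mul_comm]
      simp only [Matrix.mul_assoc, hsΓ2]
    have hNz : N = 0 := by
      apply aux_trace_transpose_mul_self_eq_zero
      rw [htr]; linarith
    have hMz : M = 0 := by
      have he : sQ⁻¹ * N * sΓ⁻¹ = M := by
        rw [hN, Matrix.mul_assoc, Matrix.mul_assoc, mul_nonsing_inv sΓ hsΓd, mul_one,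
          ← Matrix.mul_assoc, nonsing_inv_mul sQ hsQd, one_mul]
      rw [← he, hNz, Matrix.mul_zero, Matrix.zero_mul]
    have hQB : Q⁻¹ * B = (-(1/2) : ℝ) • Γ⁻¹ := by
      have h2 : (2:ℝ) • (Q⁻¹ * B) = -Γ⁻¹ := eq_neg_of_add_eq_zero_left (hM ▸ hMz)
      have h3 := congrArg (fun X => ((1:ℝ)/2) • X) h2
      simp only [smul_smul] at h3
      norm_num at h3
      rw [h3]
      ext i j
      simp [Matrix.neg_apply, Matrix.smul_apply]
    rw [Matrix.IsSymm, hQB, transpose_smul, hΓisym]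
  · intro hS
    -- backward: symmetric ⟹ trace zero
    set S := Q⁻¹ * B with hSdef
    have hSsym : Sᵀ = S := hS
    have hQS : Q * S = B := by rw [hSdef, ← Matrix.mul_assoc, hQQi, Matrix.one_mul]
    have hBT : Bᵀ = S * Q := by rw [← hQS, transpose_mul, hSsym, hQsym]
    have hMT : Mᵀ = M := by rw [hM, transpose_add, transpose_smul, hSsym, hΓisym]
    have t1 : (S * Q).trace = B.trace := by rw [← hBT, trace_transpose]
    have t2 : (Γ⁻¹ * (Q * (S * Γ))).trace = B.trace := by
      rw [← Matrix.mul_assoc Q S Γ, hQS, trace_mul_comm, Matrix.mul_assoc, hΓΓi,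
        Matrix.mul_one]
    have t3 : (Γ⁻¹ * Q).trace = -2 * B.trace := by
      have hQe : Q = -(B * Γ + Γ * Bᵀ) := eq_neg_of_add_eq_zero_right hlyap
      rw [hQe, Matrix.mul_neg, trace_neg, Matrix.mul_add, trace_add,
        trace_mul_comm Γ⁻¹ (B * Γ), Matrix.mul_assoc, hΓΓi, Matrix.mul_one,
        ← Matrix.mul_assoc Γ⁻¹ Γ Bᵀ, hΓiΓ, Matrix.one_mul, trace_transpose]
      ring
    have t4 : (S * (Q * (S * Γ))).trace = -(1/2) * B.trace := by
      have hlyap2 : B * Γ = -(Γ * Bᵀ + Q) := by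
        rw [add_assoc] at hlyap
        exact eq_neg_of_add_eq_zero_left hlyap
      have e3 : (S * (Γ * (S * Q))).trace = (S * (Q * (S * Γ))).trace := by
        rw [← Matrix.mul_assoc S Γ (S * Q), ← Matrix.mul_assoc (S * Γ) S Q,
          trace_mul_comm ((S * Γ) * S) Q, ← Matrix.mul_assoc Q (S * Γ) S,
          trace_mul_comm (Q * (S * Γ)) S, Matrix.mul_assoc]
      have key : (S * (Q * (S * Γ))).trace
          = -((S * (Γ * (S * Q))).trace + (S * Q).trace) := by
        rw [← Matrix.mul_assoc Q S Γ, hQS, hlyap2, Matrix.mul_neg, trace_neg,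
          Matrix.mul_add, trace_add, ← hBT]
      rw [e3] at key
      linarith
    have key : (Mᵀ * Q * M * Γ).trace = 0 := by
      rw [hMT, hM]
      simp only [add_mul, mul_add, smul_mul_assoc, mul_smul_comm, smul_smul,
        Matrix.mul_assoc, hΓiΓ, Matrix.mul_one, trace_add, trace_smul, smul_eq_mul]
      rw [t1, t2, t3, t4]
      ring
    rw [key, mul_zero]
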